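/- For every bounded measurable f on [0,∞) and every n ≥ 1, ‖Sⁿf − S^{n+1}f‖_∞ ≤ 2‖f‖_∞ e^{-n} nⁿ/n!, where S is the operator (Sg)(x) = e^{-x}∫₀ˣ g(t)eᵗ dt and Sⁿ denotes its n-th iterate. Consequently ‖Sⁿf − S^{n+1}f‖_∞ → 0 as n → ∞, uniformly in f with ‖f‖_∞ ≤ 1. -/

import Mathlib

open Filter MeasureTheory Set

noncomputable def Sop (f : ℝ → ℝ) (x : ℝ) : ℝ :=
  Real.exp (-x) * ∫ t in (0:ℝ)..x, f t * Real.exp t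

/-- The kernel `Kk n s = e^{-s} s^n / n!`. -/
noncomputable def Kk (n : ℕ) (s : ℝ) : ℝ := Real.exp (-s) * s ^ n / n.factorial

lemma Kk_cont (n : ℕ) : Continuous (Kk n) :=
  ((Real.continuous_exp.comp continuous_neg).mul (continuous_pow n)).div_const _

lemma Kk_nonneg (n : ℕ) {s : ℝ} (hs : 0 ≤ s) : 0 ≤ Kk n s :=
  div_nonneg (mul_nonneg (Real.exp_pos _).le (pow_nonneg hs n)) (by positivity)

lemma Kk_zero (n : ℕ) : Kk (n + 1) 0 = 0 := by simp [Kk]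

lemma exp_neg_mul_pow_le {x : ℝ} (hx : 0 ≤ x) (n : ℕ) (hn : 1 ≤ n) :
    Real.exp (-x) * x ^ n ≤ Real.exp (-(n : ℝ)) * (n : ℝ) ^ n := by
  have hn' : (0 : ℝ) < n := by exact_mod_cast hn
  set t : ℝ := x / n with ht
  have hx' : x = n * t := by rw [ht]; field_simp
  have ht0 : 0 ≤ t := div_nonneg hx hn'.le
  have h1 : t ≤ Real.exp (t - 1) := by
    have := Real.add_one_le_exp (t - 1); linarith
  have h2 : t ^ n ≤ Real.exp (t - 1) ^ n := pow_le_pow_left₀ ht0 h1 n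
  have h3 : Real.exp (t - 1) ^ n = Real.exp (x - n) := by
    rw [← Real.exp_nat_mul, hx']; ring_nf
  have h4 : x ^ n = (n : ℝ) ^ n * t ^ n := by rw [hx', mul_pow]
  have h5 : Real.exp (-x) * Real.exp (x - n) = Real.exp (-(n : ℝ)) := by
    rw [← Real.exp_add]; ring_nf
  calc Real.exp (-x) * x ^ n = Real.exp (-x) * ((n:ℝ) ^ n * t ^ n) := by rw [h4]
    _ ≤ Real.exp (-x) * ((n:ℝ) ^ n * Real.exp (x - n)) := by
        have : t ^ n ≤ Real.exp (x - n) := h3 ▸ h2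
        have hnn : (0:ℝ) ≤ (n:ℝ) ^ n := by positivity
        nlinarith [Real.exp_pos (-x), mul_le_mul_of_nonneg_left this hnn]
    _ = Real.exp (-(n : ℝ)) * (n : ℝ) ^ n := by
        rw [show Real.exp (-x) * ((n:ℝ) ^ n * Real.exp (x - n))
            = (Real.exp (-x) * Real.exp (x - n)) * (n:ℝ)^n by ring, h5]

lemma Kk_le_max (n : ℕ) (hn : 1 ≤ n) {x : ℝ} (hx : 0 ≤ x) : Kk n x ≤ Kk n n := by
  unfold Kk
  gcongr ?_ / _
  exact exp_neg_mul_pow_le hx n hn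

lemma hasDerivAt_Kk (n : ℕ) (s : ℝ) :
    HasDerivAt (Kk (n + 1)) (Kk n s - Kk (n + 1) s) s := by
  have h1 : HasDerivAt (fun s : ℝ => Real.exp (-s)) (-Real.exp (-s)) s := by
    exact ((Real.hasDerivAt_exp (-s)).comp s (hasDerivAt_neg s)).congr_deriv (by ring)
  have h2 : HasDerivAt (fun s : ℝ => s ^ (n + 1)) ((n + 1 : ℕ) * s ^ n) s := by
    simpa using hasDerivAt_pow (n + 1) s
  have h := (h1.mul h2).div_const ((n + 1).factorial : ℝ)
  refine h.congr_deriv ?_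
  have hfac : ((n+1).factorial : ℝ) = (n+1) * n.factorial := by
    rw [Nat.factorial_succ]; push_cast; ring
  have hf0 : (n.factorial : ℝ) ≠ 0 := by positivity
  have hf1 : ((n+1).factorial : ℝ) ≠ 0 := by positivity
  simp only [Kk, hfac]
  field_simp
  push_cast
  ring

lemma D_eq (n : ℕ) (s : ℝ) :
    Kk n s - Kk (n + 1) s = Real.exp (-s) * s ^ n * ((n + 1 : ℝ) - s) / (n+1).factorial := by
  have hfac : ((n+1).factorial : ℝ) = (n+1) * n.factorial := by
    rw [Nat.factorial_succ]; push_cast; ring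
  have hf0 : (n.factorial : ℝ) ≠ 0 := by positivity
  simp only [Kk, hfac]
  field_simp
  ring

lemma D_nonneg (n : ℕ) {s : ℝ} (h0 : 0 ≤ s) (h1 : s ≤ n + 1) :
    0 ≤ Kk n s - Kk (n + 1) s := by
  rw [D_eq]
  have : (0:ℝ) ≤ (n + 1 : ℝ) - s := by linarith
  positivity

lemma D_nonpos (n : ℕ) {s : ℝ} (h1 : (n + 1 : ℝ) ≤ s) :
    Kk n s - Kk (n + 1) s ≤ 0 := by
  have h0 : (0:ℝ) ≤ s := le_trans (by positivity) h1
  rw [D_eq]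
  apply div_nonpos_of_nonpos_of_nonneg _ (by positivity)
  apply mul_nonpos_of_nonneg_of_nonpos (by positivity)
  linarith

lemma integral_D (n : ℕ) (a b : ℝ) :
    ∫ s in a..b, (Kk n s - Kk (n + 1) s) = Kk (n + 1) b - Kk (n + 1) a :=
  intervalIntegral.integral_eq_sub_of_hasDerivAt (fun s _ => hasDerivAt_Kk n s)
    (((Kk_cont n).sub (Kk_cont (n + 1))).intervalIntegrable a b)

lemma int_abs_D_le (n : ℕ) {x : ℝ} (hx : 0 ≤ x) :
    ∫ s in (0:ℝ)..x, |Kk n s - Kk (n + 1) s| ≤ 2 * Kk (n + 1) (n + 1) := by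
  have hcont : Continuous fun s => |Kk n s - Kk (n + 1) s| :=
    ((Kk_cont n).sub (Kk_cont (n + 1))).abs
  have hKnn : 0 ≤ Kk (n + 1) ((n:ℝ) + 1) := Kk_nonneg _ (by positivity)
  rcases le_or_gt x ((n : ℝ) + 1) with hcase | hcase
  · have : ∫ s in (0:ℝ)..x, |Kk n s - Kk (n + 1) s|
        = ∫ s in (0:ℝ)..x, (Kk n s - Kk (n + 1) s) := by
      apply intervalIntegral.integral_congr
      intro s hs
      rw [uIcc_of_le hx] at hs
      exact abs_of_nonneg (D_nonneg n hs.1 (le_trans hs.2 hcase))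
    rw [this, integral_D, Kk_zero, sub_zero]
    have := Kk_le_max (n + 1) (by omega) hx
    push_cast at this ⊢
    linarith
  · have hsplit : ∫ s in (0:ℝ)..x, |Kk n s - Kk (n + 1) s|
        = (∫ s in (0:ℝ)..((n:ℝ)+1), |Kk n s - Kk (n + 1) s|)
          + ∫ s in ((n:ℝ)+1)..x, |Kk n s - Kk (n + 1) s| := by
      rw [intervalIntegral.integral_add_adjacent_intervals] <;>
        exact hcont.intervalIntegrable _ _
    rw [hsplit]
    have h1 : ∫ s in (0:ℝ)..((n:ℝ)+1), |Kk n s - Kk (n + 1) s|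
        = Kk (n + 1) ((n:ℝ)+1) := by
      rw [show (∫ s in (0:ℝ)..((n:ℝ)+1), |Kk n s - Kk (n + 1) s|)
          = ∫ s in (0:ℝ)..((n:ℝ)+1), (Kk n s - Kk (n + 1) s) from
        intervalIntegral.integral_congr fun s hs => by
          rw [uIcc_of_le (by positivity)] at hs
          exact abs_of_nonneg (D_nonneg n hs.1 hs.2)]
      rw [integral_D, Kk_zero, sub_zero]
    have h2 : ∫ s in ((n:ℝ)+1)..x, |Kk n s - Kk (n + 1) s|
        = Kk (n + 1) ((n:ℝ)+1) - Kk (n + 1) x := by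
      rw [show (∫ s in ((n:ℝ)+1)..x, |Kk n s - Kk (n + 1) s|)
          = ∫ s in ((n:ℝ)+1)..x, -(Kk n s - Kk (n + 1) s) from
        intervalIntegral.integral_congr fun s hs => by
          rw [uIcc_of_le hcase.le] at hs
          exact abs_of_nonpos (D_nonpos n hs.1)]
      rw [intervalIntegral.integral_neg, integral_D]
      norm_num
    have hKx : 0 ≤ Kk (n + 1) x := Kk_nonneg _ hx
    linarith

lemma intervalIntegrable_of_bounded {g : ℝ → ℝ} (hg : Measurable g) {a b M : ℝ}
    (hab : a ≤ b) (h : ∀ t ∈ Set.Ioc a b, |g t| ≤ M) :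
    IntervalIntegrable g volume a b := by
  rw [intervalIntegrable_iff, uIoc_of_le hab]
  refine Integrable.mono' (integrable_const M) hg.aestronglyMeasurable.restrict ?_
  rw [ae_restrict_iff' measurableSet_Ioc]
  filter_upwards with t ht
  simpa [Real.norm_eq_abs] using h t ht

lemma exp_neg_sub (a b : ℝ) : Real.exp (-(a - b)) = Real.exp (-a) * Real.exp b := by
  rw [← Real.exp_add]; ring_nf

/-- Convolution representation of the iterates of `Sop`. -/
lemma Sop_iterate_rep (f : ℝ → ℝ) (hf : Measurable f) (C : ℝ) (hC : ∀ x, |f x| ≤ C) :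
    ∀ n : ℕ, ∀ x : ℝ, 0 ≤ x →
      Sop^[n + 1] f x = ∫ t in (0:ℝ)..x, f t * Kk n (x - t) := by
  intro n
  induction n with
  | zero =>
    intro x hx
    show Sop f x = _
    unfold Sop
    rw [← intervalIntegral.integral_const_mul]
    apply intervalIntegral.integral_congr
    intro t _
    simp only [Kk, pow_zero, Nat.factorial_zero, Nat.cast_one, mul_one, div_one,
      exp_neg_sub]
    ring
  | succ n ih =>
    intro x hx
    rw [Function.iterate_succ_apply']
    rw [show Sop (Sop^[n+1] f) x
        = Real.exp (-x) * ∫ t in (0:ℝ)..x, Sop^[n+1] f t * Real.exp t from rfl]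
    -- the inner function is given by the induction hypothesis
    have step1 : (∫ t in (0:ℝ)..x, Sop^[n+1] f t * Real.exp t)
        = ∫ t in (0:ℝ)..x, (∫ u in (0:ℝ)..t, f u * Kk n (t - u)) * Real.exp t := by
      apply intervalIntegral.integral_congr
      intro t ht
      rw [uIcc_of_le hx] at ht
      dsimp only
      rw [ih t ht.1]
    rw [step1]
    -- switch to set integrals over `Ioc 0 x`
    set F : ℝ → ℝ → ℝ := fun t u =>
      if u ≤ t then f u * Kk n (t - u) * Real.exp t else 0 with hF
    have hC0 : 0 ≤ C := le_trans (abs_nonneg _) (hC 0)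
    have hKbd : ∀ s, 0 ≤ s → s ≤ x → Kk n s ≤ x ^ n / n.factorial := by
      intro s h0 h1
      unfold Kk
      gcongr ?_ / _
      calc Real.exp (-s) * s ^ n ≤ 1 * s ^ n := by
            gcongr
            exact Real.exp_le_one_iff.mpr (by linarith)
        _ = s ^ n := one_mul _
        _ ≤ x ^ n := pow_le_pow_left₀ h0 h1 n
    set M : ℝ := C * (x ^ n / n.factorial) * Real.exp x with hM
    have hFbd : ∀ t ∈ Set.Ioc (0:ℝ) x, ∀ u ∈ Set.Ioc (0:ℝ) x, |F t u| ≤ M := by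
      intro t ht u hu
      rw [hF]
      dsimp only
      split_ifs with h
      · have h1 : 0 ≤ t - u := by linarith
        have h2 : t - u ≤ x := by
          have := hu.1; have := ht.2; linarith
        have hK0 : 0 ≤ Kk n (t - u) := Kk_nonneg n h1
        rw [abs_mul, abs_mul, abs_of_nonneg hK0, Real.abs_exp]
        calc |f u| * Kk n (t - u) * Real.exp t
            ≤ C * (x ^ n / n.factorial) * Real.exp x := by
              gcongr
              · exact hC u
              · exact hKbd _ h1 h2
              · exact ht.2
          _ = M := rfl
      · simp only [abs_zero]
        have : 0 ≤ Kk n 0 := Kk_nonneg n le_rfl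
        positivity
    have hFmeas : Measurable (Function.uncurry F) := by
      apply Measurable.ite (measurableSet_le measurable_snd measurable_fst)
      · exact ((hf.comp measurable_snd).mul
          ((Kk_cont n).measurable.comp (measurable_fst.sub measurable_snd))).mul
          (Real.measurable_exp.comp measurable_fst)
      · exact measurable_const
    have hFint : Integrable (Function.uncurry F)
        ((volume.restrict (Set.Ioc (0:ℝ) x)).prod (volume.restrict (Set.Ioc (0:ℝ) x))) := by
      refine Integrable.mono' (integrable_const M) hFmeas.aestronglyMeasurable ?_
      rw [Measure.prod_restrict, ae_restrict_iff' (measurableSet_Ioc.prod measurableSet_Ioc)]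
      filter_upwards with p hp
      simpa [Real.norm_eq_abs, Function.uncurry] using hFbd p.1 hp.1 p.2 hp.2
    -- inner integral rewrite
    have step2 : (∫ t in (0:ℝ)..x, (∫ u in (0:ℝ)..t, f u * Kk n (t - u)) * Real.exp t)
        = ∫ t in Set.Ioc (0:ℝ) x, ∫ u in Set.Ioc (0:ℝ) x, F t u := by
      rw [intervalIntegral.integral_of_le hx]
      apply setIntegral_congr_fun measurableSet_Ioc
      intro t ht
      have h1 : ∀ u, F t u = Set.indicator (Set.Iic t)
          (fun u => f u * Kk n (t - u) * Real.exp t) u := by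
        intro u
        rw [hF]
        by_cases h : u ≤ t
        · simp [Set.indicator_of_mem, h, Set.mem_Iic]
        · simp [Set.indicator_of_notMem, h, Set.mem_Iic]
      simp only [h1]
      rw [setIntegral_indicator measurableSet_Iic]
      have hset : Set.Ioc (0:ℝ) x ∩ Set.Iic t = Set.Ioc 0 t := by
        rw [Set.Ioc_inter_Iic, min_eq_right ht.2]
      rw [hset, ← intervalIntegral.integral_of_le ht.1.le,
        ← intervalIntegral.integral_mul_const]
    rw [step2]
    -- Fubini
    have step3 : (∫ t in Set.Ioc (0:ℝ) x, ∫ u in Set.Ioc (0:ℝ) x, F t u)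
        = ∫ u in Set.Ioc (0:ℝ) x, ∫ t in Set.Ioc (0:ℝ) x, F t u :=
      integral_integral_swap hFint
    rw [step3]
    -- compute the inner integral
    have step4 : ∀ u ∈ Set.Ioc (0:ℝ) x,
        (∫ t in Set.Ioc (0:ℝ) x, F t u)
          = f u * Real.exp u / n.factorial * ((x - u) ^ (n+1) / ((n:ℝ)+1)) := by
      intro u hu
      have h1 : ∀ t, F t u = Set.indicator (Set.Ici u)
          (fun t => f u * Kk n (t - u) * Real.exp t) t := by
        intro t
        rw [hF]
        by_cases h : u ≤ t
        · simp [Set.indicator_of_mem, h, Set.mem_Ici]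
        · simp [Set.indicator_of_notMem, h, Set.mem_Ici]
      simp only [h1]
      rw [setIntegral_indicator measurableSet_Ici]
      have hset : Set.Ioc (0:ℝ) x ∩ Set.Ici u = Set.Icc u x := by
        ext s
        simp only [Set.mem_inter_iff, Set.mem_Ioc, Set.mem_Ici, Set.mem_Icc]
        constructor
        · rintro ⟨⟨_, h2⟩, h3⟩; exact ⟨h3, h2⟩
        · rintro ⟨h1', h2⟩; exact ⟨⟨lt_of_lt_of_le hu.1 h1', h2⟩, h1'⟩
      rw [hset, integral_Icc_eq_integral_Ioc, ← intervalIntegral.integral_of_le hu.2]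
      have h2 : ∀ t : ℝ, f u * Kk n (t - u) * Real.exp t
          = (f u * Real.exp u / n.factorial) * (t - u) ^ n := by
        intro t
        have hee : Real.exp (-t) * Real.exp t = 1 := by
          rw [← Real.exp_add]; simp
        simp only [Kk, exp_neg_sub]
        field_simp
        linear_combination f u * (t - u) ^ n * hee
      simp only [h2]
      rw [intervalIntegral.integral_const_mul, intervalIntegral.integral_comp_sub_right
        (fun s => s ^ n) u, sub_self, integral_pow, zero_pow (Nat.succ_ne_zero n), sub_zero]
    rw [setIntegral_congr_fun measurableSet_Ioc step4]
    -- assemble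
    rw [intervalIntegral.integral_of_le hx, ← integral_const_mul]
    apply setIntegral_congr_fun measurableSet_Ioc
    intro u _
    simp only [Kk, exp_neg_sub, Nat.factorial_succ]
    push_cast
    field_simp

/-- The key pointwise bound. -/
lemma key_bound (f : ℝ → ℝ) (C : ℝ) (hf : Measurable f) (hC : ∀ x, |f x| ≤ C)
    (n : ℕ) (hn : 1 ≤ n) {x : ℝ} (hx : 0 ≤ x) :
    |Sop^[n] f x - Sop^[n+1] f x|
      ≤ 2 * C * Real.exp (-(n:ℝ)) * (n:ℝ) ^ n / n.factorial := by
  obtain ⟨m, rfl⟩ : ∃ m, n = m + 1 := ⟨n - 1, by omega⟩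
  have hC0 : 0 ≤ C := le_trans (abs_nonneg _) (hC 0)
  rw [Sop_iterate_rep f hf C hC m x hx, Sop_iterate_rep f hf C hC (m+1) x hx]
  have hbd : ∀ k : ℕ, ∀ t ∈ Set.Ioc (0:ℝ) x, |f t * Kk k (x - t)| ≤ C * (x ^ k / k.factorial) := by
    intro k t ht
    have h1 : 0 ≤ x - t := by linarith [ht.2]
    have h2 : x - t ≤ x := by linarith [ht.1]
    have hK0 : 0 ≤ Kk k (x - t) := Kk_nonneg k h1
    rw [abs_mul, abs_of_nonneg hK0]
    gcongr
    · exact hC t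
    · unfold Kk
      gcongr ?_ / _
      calc Real.exp (-(x - t)) * (x - t) ^ k ≤ 1 * (x - t) ^ k := by
            gcongr
            exact Real.exp_le_one_iff.mpr (by linarith)
        _ = (x - t) ^ k := one_mul _
        _ ≤ x ^ k := pow_le_pow_left₀ h1 h2 k
  have hint : ∀ k : ℕ, IntervalIntegrable (fun t => f t * Kk k (x - t)) volume 0 x := by
    intro k
    apply intervalIntegrable_of_bounded _ hx (hbd k)
    exact (hf.mul ((Kk_cont k).measurable.comp (measurable_const.sub measurable_id)))
  rw [← intervalIntegral.integral_sub (hint m) (hint (m+1))]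
  have heq : ∀ t : ℝ, f t * Kk m (x - t) - f t * Kk (m+1) (x - t)
      = f t * (Kk m (x - t) - Kk (m+1) (x - t)) := fun t => by ring
  simp only [heq]
  have habs : |∫ t in (0:ℝ)..x, f t * (Kk m (x - t) - Kk (m+1) (x - t))|
      ≤ ∫ t in (0:ℝ)..x, |f t * (Kk m (x - t) - Kk (m+1) (x - t))| :=
    intervalIntegral.abs_integral_le_integral_abs hx
  have hint2 : IntervalIntegrable (fun t => f t * (Kk m (x-t) - Kk (m+1) (x-t))) volume 0 x := by
    simpa only [mul_sub] using (hint m).sub (hint (m+1))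
  have hmono : (∫ t in (0:ℝ)..x, |f t * (Kk m (x - t) - Kk (m+1) (x - t))|)
      ≤ ∫ t in (0:ℝ)..x, C * |Kk m (x - t) - Kk (m+1) (x - t)| := by
    apply intervalIntegral.integral_mono_on hx
    · exact hint2.abs
    · exact (continuous_const.mul ((((Kk_cont m).sub (Kk_cont (m+1))).comp
        (continuous_const.sub continuous_id)).abs)).intervalIntegrable 0 x
    · intro t _
      rw [abs_mul]
      gcongr
      exact hC t
  have hcomp : (∫ t in (0:ℝ)..x, |Kk m (x - t) - Kk (m+1) (x - t)|)
      = ∫ s in (0:ℝ)..x, |Kk m s - Kk (m+1) s| := by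
    rw [intervalIntegral.integral_comp_sub_left (fun s => |Kk m s - Kk (m+1) s|) x]
    norm_num
  calc |∫ t in (0:ℝ)..x, f t * (Kk m (x - t) - Kk (m+1) (x - t))|
      ≤ ∫ t in (0:ℝ)..x, C * |Kk m (x - t) - Kk (m+1) (x - t)| := le_trans habs hmono
    _ = C * ∫ s in (0:ℝ)..x, |Kk m s - Kk (m+1) s| := by
        rw [intervalIntegral.integral_const_mul, hcomp]
    _ ≤ C * (2 * Kk (m+1) (m+1)) :=
        mul_le_mul_of_nonneg_left (int_abs_D_le m hx) hC0
    _ = 2 * C * Real.exp (-((m+1:ℕ):ℝ)) * ((m+1:ℕ):ℝ) ^ (m+1) / (m+1).factorial := by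
        unfold Kk
        push_cast
        ring
    _ = 2 * C * Real.exp (-(((m+1):ℕ):ℝ)) * (((m+1):ℕ):ℝ) ^ ((m+1):ℕ) / ((m+1):ℕ).factorial := by
        norm_num

lemma tendsto_bound :
    Tendsto (fun n : ℕ => 2 * Real.exp (-(n:ℝ)) * (n:ℝ) ^ n / n.factorial) atTop (nhds 0) := by
  have hsqrt : Tendsto (fun n : ℕ => Real.sqrt (2 * n)) atTop atTop := by
    have h0 : Tendsto Real.sqrt atTop atTop := by
      have h := tendsto_rpow_atTop (y := (1/2 : ℝ)) (by norm_num)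
      refine h.congr' ?_
      filter_upwards with x
      rw [Real.sqrt_eq_rpow]
    exact h0.comp (tendsto_natCast_atTop_atTop.const_mul_atTop (by norm_num))
  have hprod : Tendsto (fun n : ℕ => Stirling.stirlingSeq n * Real.sqrt (2 * n)) atTop atTop :=
    Filter.Tendsto.pos_mul_atTop (Real.sqrt_pos.mpr Real.pi_pos)
      Stirling.tendsto_stirlingSeq_sqrt_pi hsqrt
  have hinv : Tendsto (fun n : ℕ => (Stirling.stirlingSeq n * Real.sqrt (2 * n))⁻¹)
      atTop (nhds 0) := hprod.inv_tendsto_atTop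
  have heq : ∀ᶠ n : ℕ in atTop, 2 * (Stirling.stirlingSeq n * Real.sqrt (2 * n))⁻¹
      = 2 * Real.exp (-(n:ℝ)) * (n:ℝ) ^ n / n.factorial := by
    filter_upwards [eventually_ge_atTop 1] with n hn
    have hn' : (0:ℝ) < n := by exact_mod_cast hn
    have hs : (0:ℝ) < Real.sqrt (2 * n) := Real.sqrt_pos.mpr (by positivity)
    have hfac : (0:ℝ) < n.factorial := by exact_mod_cast n.factorial_pos
    have hP : ((n:ℝ) / Real.exp 1) ^ n = (n:ℝ) ^ n * Real.exp (-(n:ℝ)) := by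
      rw [div_pow, Real.exp_one_pow, Real.exp_neg, div_eq_mul_inv]
    have hexp : (0:ℝ) < Real.exp (-(n:ℝ)) := Real.exp_pos _
    rw [Stirling.stirlingSeq, hP]
    have hnn : (0:ℝ) < (n:ℝ) ^ n := by positivity
    field_simp
  have h2 := hinv.const_mul (2:ℝ)
  rw [mul_zero] at h2
  exact Filter.Tendsto.congr' heq h2

theorem stmt15 :
    (∀ (f : ℝ → ℝ) (C : ℝ), Measurable f → (∀ x, |f x| ≤ C) →
      ∀ n : ℕ, 1 ≤ n → ∀ x ≥ (0:ℝ),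
        |Sop^[n] f x - Sop^[n+1] f x|
          ≤ 2 * C * Real.exp (-(n:ℝ)) * (n:ℝ) ^ n / n.factorial) ∧
    (∀ ε > (0:ℝ), ∃ N : ℕ, ∀ n ≥ N, ∀ f : ℝ → ℝ, Measurable f →
      (∀ x, |f x| ≤ 1) → ∀ x ≥ (0:ℝ), |Sop^[n] f x - Sop^[n+1] f x| ≤ ε) := by
  constructor
  · intro f C hf hC n hn x hx
    exact key_bound f C hf hC n hn hx
  · intro ε hε
    have h := tendsto_bound.eventually_le_const hε
    obtain ⟨N, hN⟩ := eventually_atTop.mp h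
    refine ⟨max N 1, fun n hn f hf hb x hx => ?_⟩
    have h1 : 1 ≤ n := le_trans (le_max_right N 1) hn
    have h2 := key_bound f 1 hf hb n h1 hx
    have h3 := hN n (le_trans (le_max_left N 1) hn)
    calc |Sop^[n] f x - Sop^[n+1] f x|
        ≤ 2 * 1 * Real.exp (-(n:ℝ)) * (n:ℝ) ^ n / n.factorial := h2
      _ = 2 * Real.exp (-(n:ℝ)) * (n:ℝ) ^ n / n.factorial := by ring
      _ ≤ ε := h3
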